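/- Suppose α₀ = 0 and γ₀ = 0, but α₁ ≠ 0 or γ₁ ≠ 0. Then the number of pairs (x₁, x₂) ∈ 𝔽_q × 𝔽_q with (x₁, x₂) ≠ (0, 0) satisfying both A(x₁, x₂) = 0 and B(x₁, x₂) = 0 is at most 6. -/

import Mathlib

open Polynomial Finset

/-- A nonzero quadratic has at most 2 roots. -/
lemma quad_filter_card {F : Type*} [Field F] [Fintype F] [DecidableEq F]
    (a b c : F) (h : ¬(a = 0 ∧ b = 0 ∧ c = 0)) :
    (Finset.univ.filter fun y : F => a + b * y + c * y ^ 2 = 0).card ≤ 2 := by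
  set P : F[X] := C c * X ^ 2 + C b * X + C a with hP
  have hPne : P ≠ 0 := by
    intro h0
    apply h
    refine ⟨?_, ?_, ?_⟩
    · have := congrArg (fun p : F[X] => p.coeff 0) h0
      simpa [hP] using this
    · have := congrArg (fun p : F[X] => p.coeff 1) h0
      simpa [hP] using this
    · have := congrArg (fun p : F[X] => p.coeff 2) h0
      simpa [hP] using this
  have hsub : (Finset.univ.filter fun y : F => a + b * y + c * y ^ 2 = 0)
      ⊆ P.roots.toFinset := by
    intro y hy
    rw [Finset.mem_filter] at hy
    rw [Multiset.mem_toFinset, Polynomial.mem_roots hPne]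
    have : P.eval y = c * y ^ 2 + b * y + a := by simp [hP]
    rw [Polynomial.IsRoot, this]
    linear_combination hy.2
  calc (Finset.univ.filter fun y : F => a + b * y + c * y ^ 2 = 0).card
      ≤ P.roots.toFinset.card := Finset.card_le_card hsub
    _ ≤ Multiset.card P.roots := Multiset.toFinset_card_le _
    _ ≤ P.natDegree := P.card_roots' 
    _ ≤ 2 := Polynomial.natDegree_quadratic_le

/-- A nonzero cubic has at most 3 roots. -/
lemma cubic_filter_card {F : Type*} [Field F] [Fintype F] [DecidableEq F]
    (a b c d : F) (h : ¬(a = 0 ∧ b = 0 ∧ c = 0 ∧ d = 0)) :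
    (Finset.univ.filter fun y : F => a + b * y + c * y ^ 2 + d * y ^ 3 = 0).card ≤ 3 := by
  set P : F[X] := C d * X ^ 3 + C c * X ^ 2 + C b * X + C a with hP
  have hPne : P ≠ 0 := by
    intro h0
    apply h
    refine ⟨?_, ?_, ?_, ?_⟩
    · have := congrArg (fun p : F[X] => p.coeff 0) h0
      simpa [hP] using this
    · have := congrArg (fun p : F[X] => p.coeff 1) h0
      simpa [hP] using this
    · have := congrArg (fun p : F[X] => p.coeff 2) h0
      simpa [hP] using this
    · have := congrArg (fun p : F[X] => p.coeff 3) h0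
      simpa [hP] using this
  have hsub : (Finset.univ.filter fun y : F => a + b * y + c * y ^ 2 + d * y ^ 3 = 0)
      ⊆ P.roots.toFinset := by
    intro y hy
    rw [Finset.mem_filter] at hy
    rw [Multiset.mem_toFinset, Polynomial.mem_roots hPne]
    have : P.eval y = d * y ^ 3 + c * y ^ 2 + b * y + a := by simp [hP]
    rw [Polynomial.IsRoot, this]
    linear_combination hy.2
  calc (Finset.univ.filter fun y : F => a + b * y + c * y ^ 2 + d * y ^ 3 = 0).card
      ≤ P.roots.toFinset.card := Finset.card_le_card hsub
    _ ≤ Multiset.card P.roots := Multiset.toFinset_card_le _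
    _ ≤ P.natDegree := P.card_roots'
    _ ≤ 3 := Polynomial.natDegree_cubic_le

/-- odd characteristic: Suppose `α₀ = 0` and `γ₀ = 0`, but `α₁ ≠ 0` or
`γ₁ ≠ 0`. Then the number of pairs `(x₁, x₂) ∈ 𝔽_q × 𝔽_q` with `(x₁, x₂) ≠ (0, 0)`
satisfying both `A(x₁, x₂) = 0` and `B(x₁, x₂) = 0` is at most `6`, where
`A = (α₀ + β₀X₁ + sβ₁X₂ + γ₀(X₁² − sX₂²))(X₁² − sX₂²) + X₁(X₁² + 3sX₂²)` and
`B = (α₁ + β₁X₁ + β₀X₂ + γ₁(X₁² − sX₂²))(X₁² − sX₂²) + X₂(3X₁² + sX₂²)`. -/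
theorem stmt_14 (q : ℕ) (hq : IsPrimePow q) (hodd : Odd q)
    (F : Type*) [Field F] [Fintype F] [DecidableEq F] (hF : Fintype.card F = q)
    (s : F) (hs : ¬IsSquare s)
    (α₀ α₁ β₀ β₁ γ₀ γ₁ : F)
    (hα₀ : α₀ = 0) (hγ₀ : γ₀ = 0) (h : α₁ ≠ 0 ∨ γ₁ ≠ 0) :
    (Finset.univ.filter fun p : F × F => p ≠ (0, 0) ∧
        (α₀ + β₀ * p.1 + s * β₁ * p.2 + γ₀ * (p.1 ^ 2 - s * p.2 ^ 2)) *
            (p.1 ^ 2 - s * p.2 ^ 2) + p.1 * (p.1 ^ 2 + 3 * s * p.2 ^ 2) = 0 ∧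
        (α₁ + β₁ * p.1 + β₀ * p.2 + γ₁ * (p.1 ^ 2 - s * p.2 ^ 2)) *
            (p.1 ^ 2 - s * p.2 ^ 2) + p.2 * (3 * p.1 ^ 2 + s * p.2 ^ 2) = 0).card ≤ 6 := by
  classical
  subst hα₀ hγ₀
  have hs0 : s ≠ 0 := by
    intro h0
    exact hs ⟨0, by rw [h0]; ring⟩
  -- characteristic is odd
  have h2 : (2 : F) ≠ 0 := by
    intro h20
    have hdvd : ringChar F ∣ 2 := (ringChar.spec F 2).mp (by exact_mod_cast h20)
    obtain ⟨n, hp, hcard⟩ := FiniteField.card F (ringChar F)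
    have hchar2 : ringChar F = 2 := ((Nat.prime_dvd_prime_iff_eq hp Nat.prime_two).mp hdvd)
    rw [hchar2] at hcard
    rw [hF] at hcard
    have : Even q := by
      rw [hcard]
      exact (Nat.even_pow' (by exact_mod_cast n.pos.ne')).mpr even_two
    exact (Nat.not_even_iff_odd.mpr hodd) this
  set f : F × F → Option F := fun p => if p.1 = 0 then none else some (p.2 / p.1) with hf
  set S := Finset.univ.filter (fun p : F × F => p ≠ (0, 0) ∧
        (0 + β₀ * p.1 + s * β₁ * p.2 + 0 * (p.1 ^ 2 - s * p.2 ^ 2)) *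
            (p.1 ^ 2 - s * p.2 ^ 2) + p.1 * (p.1 ^ 2 + 3 * s * p.2 ^ 2) = 0 ∧
        (α₁ + β₁ * p.1 + β₀ * p.2 + γ₁ * (p.1 ^ 2 - s * p.2 ^ 2)) *
            (p.1 ^ 2 - s * p.2 ^ 2) + p.2 * (3 * p.1 ^ 2 + s * p.2 ^ 2) = 0) with hSdef
  -- basic facts about membership
  have hmem : ∀ p : F × F, p ∈ S → p ≠ (0,0) ∧
      (β₀ * p.1 + s * β₁ * p.2) * (p.1 ^ 2 - s * p.2 ^ 2)
        + p.1 * (p.1 ^ 2 + 3 * s * p.2 ^ 2) = 0 ∧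
      (α₁ + β₁ * p.1 + β₀ * p.2 + γ₁ * (p.1 ^ 2 - s * p.2 ^ 2)) *
            (p.1 ^ 2 - s * p.2 ^ 2) + p.2 * (3 * p.1 ^ 2 + s * p.2 ^ 2) = 0 := by
    intro p hp
    rw [hSdef, Finset.mem_filter] at hp
    refine ⟨hp.2.1, by linear_combination hp.2.2.1, hp.2.2.2⟩
  -- slope facts
  have hslope : ∀ p : F × F, p ∈ S → ∀ m : F, f p = some m → p.1 ≠ 0 ∧ p.2 = m * p.1 := by
    intro p _ m hm
    rw [hf] at hm
    by_cases hp1 : p.1 = 0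
    · simp [hp1] at hm
    · simp only [hp1, if_false, Option.some.injEq] at hm
      rw [div_eq_iff hp1] at hm
      exact ⟨hp1, by linear_combination hm⟩
  -- each fiber has at most 2 points
  have hfib : ∀ b ∈ S.image f, (S.filter fun p => f p = b).card ≤ 2 := by
    intro b _
    match b with
    | none =>
      -- vertical points: p.1 = 0, p.2 root of a nonzero quadratic
      have hcoef0 : ¬((α₁ : F) = 0 ∧ (β₀ - 1 : F) = 0 ∧ -(s * γ₁) = 0) := by
        rintro ⟨h1, _, h3⟩
        rcases h with hα | hγ
        · exact hα h1
        · rcases mul_eq_zero.mp (neg_eq_zero.mp h3) with h' | h'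
          · exact hs0 h'
          · exact hγ h'
      refine le_trans (Finset.card_le_card_of_injOn Prod.snd ?_ ?_)
        (quad_filter_card α₁ (β₀ - 1) (-(s * γ₁)) hcoef0)
      · intro p hp
        rw [Finset.mem_coe, Finset.mem_filter] at hp
        obtain ⟨hpS, hfp⟩ := hp
        have hp1 : p.1 = 0 := by
          by_contra hp1
          rw [hf] at hfp
          simp [hp1] at hfp
        obtain ⟨hne, _, hB⟩ := hmem p hpS
        have hp2 : p.2 ≠ 0 := by
          intro h0
          exact hne (Prod.ext hp1 h0)
        rw [hp1] at hB
        have key : (-(s * p.2 ^ 2)) * (α₁ + (β₀ - 1) * p.2 + (-(s * γ₁)) * p.2 ^ 2) = 0 := by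
          linear_combination hB
        have hq0 : α₁ + (β₀ - 1) * p.2 + (-(s * γ₁)) * p.2 ^ 2 = 0 := by
          rcases mul_eq_zero.mp key with hk | hk
          · exact absurd hk (by simpa using mul_ne_zero hs0 (pow_ne_zero 2 hp2))
          · exact hk
        exact Finset.mem_filter.mpr ⟨Finset.mem_univ _, hq0⟩
      · intro p hp p' hp' hsnd
        rw [Finset.coe_filter] at hp hp'
        obtain ⟨hpS, hfp⟩ := hp
        obtain ⟨hpS', hfp'⟩ := hp'
        have hp1 : p.1 = 0 := by
          by_contra hp1; rw [hf] at hfp; simp [hp1] at hfp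
        have hp1' : p'.1 = 0 := by
          by_contra hp1; rw [hf] at hfp'; simp [hp1] at hfp'
        exact Prod.ext (hp1.trans hp1'.symm) hsnd
    | some m =>
      -- points on line x₂ = m x₁ : x₁ root of a nonzero quadratic
      have hn : (1 : F) - s * m ^ 2 ≠ 0 := by
        intro hn0
        apply hs
        have hm : m ≠ 0 := by
          rintro rfl
          simp at hn0
        refine ⟨m⁻¹, ?_⟩
        have h1 : s * m ^ 2 = 1 := by linear_combination -hn0
        have hinv : m ^ 2 * (m⁻¹ * m⁻¹) = 1 := by
          rw [pow_two]
          field_simp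
        linear_combination m⁻¹ * m⁻¹ * h1 - s * hinv
      have hcoef : ¬(α₁ * (1 - s * m ^ 2) = 0 ∧
          ((β₁ + β₀ * m) * (1 - s * m ^ 2) + m * (3 + s * m ^ 2)) = 0 ∧
          γ₁ * (1 - s * m ^ 2) ^ 2 = 0) := by
        rintro ⟨h1, _, h3⟩
        rcases h with hα | hγ
        · exact hα (by rcases mul_eq_zero.mp h1 with h' | h' <;> [exact h'; exact absurd h' hn])
        · rcases mul_eq_zero.mp h3 with h' | h'
          · exact hγ h'
          · exact hn (pow_eq_zero_iff (n := 2) (by norm_num) |>.mp h')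
      refine le_trans (Finset.card_le_card_of_injOn Prod.fst ?_ ?_)
        (quad_filter_card (α₁ * (1 - s * m ^ 2))
          ((β₁ + β₀ * m) * (1 - s * m ^ 2) + m * (3 + s * m ^ 2))
          (γ₁ * (1 - s * m ^ 2) ^ 2) hcoef)
      · intro p hp
        rw [Finset.mem_coe, Finset.mem_filter] at hp
        obtain ⟨hpS, hfp⟩ := hp
        obtain ⟨hp1, hp2⟩ := hslope p hpS m hfp
        obtain ⟨_, _, hB⟩ := hmem p hpS
        rw [hp2] at hB
        have key : p.1 ^ 2 * (α₁ * (1 - s * m ^ 2)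
            + ((β₁ + β₀ * m) * (1 - s * m ^ 2) + m * (3 + s * m ^ 2)) * p.1
            + (γ₁ * (1 - s * m ^ 2) ^ 2) * p.1 ^ 2) = 0 := by
          linear_combination hB
        have hq0 := (mul_eq_zero.mp key).resolve_left (pow_ne_zero 2 hp1)
        exact Finset.mem_filter.mpr ⟨Finset.mem_univ _, hq0⟩
      · intro p hp p' hp' hfst
        rw [Finset.coe_filter] at hp hp'
        obtain ⟨hpS, hfp⟩ := hp
        obtain ⟨hpS', hfp'⟩ := hp'
        obtain ⟨_, hp2⟩ := hslope p hpS m hfp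
        obtain ⟨_, hp2'⟩ := hslope p' hpS' m hfp'
        exact Prod.ext hfst (by rw [hp2, hp2', hfst])
  -- the image has at most 3 elements
  have himg : (S.image f).card ≤ 3 := by
    by_cases hb1 : β₁ = 0
    · -- degenerate cubic: at most 2 slopes plus possibly the vertical direction
      have hsub : S.image f ⊆ insert none
          ((Finset.univ.filter fun m : F =>
            (1 + β₀) + 0 * m + s * (3 - β₀) * m ^ 2 = 0).map
              Function.Embedding.some) := by
        intro b hb
        obtain ⟨p, hpS, hfp⟩ := Finset.mem_image.mp hb
        by_cases hp1 : p.1 = 0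
        · rw [hf] at hfp
          simp only [hp1, if_true] at hfp
          rw [← hfp]
          exact Finset.mem_insert_self _ _
        · have hfp' : f p = some (p.2 / p.1) := by rw [hf]; simp [hp1]
          obtain ⟨_, hp2⟩ := hslope p hpS (p.2 / p.1) hfp'
          obtain ⟨_, hA, _⟩ := hmem p hpS
          rw [hb1, hp2] at hA
          set m := p.2 / p.1
          have key : p.1 ^ 3 * ((1 + β₀) + 0 * m + s * (3 - β₀) * m ^ 2) = 0 := by
            linear_combination hA
          have hq0 := (mul_eq_zero.mp key).resolve_left (pow_ne_zero 3 hp1)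
          rw [← hfp, hfp']
          refine Finset.mem_insert_of_mem ?_
          rw [Finset.mem_map]
          exact ⟨m, Finset.mem_filter.mpr ⟨Finset.mem_univ _, hq0⟩, rfl⟩
      have hcoef : ¬((1 + β₀ : F) = 0 ∧ (0 : F) = 0 ∧ s * (3 - β₀) = 0) := by
        rintro ⟨h1, _, h3⟩
        have h3' : (3 : F) - β₀ = 0 := by
          rcases mul_eq_zero.mp h3 with h' | h'
          · exact absurd h' hs0
          · exact h'
        have : (2 : F) * 2 = 0 := by linear_combination h1 + h3'
        rcases mul_eq_zero.mp this with h' | h' <;> exact h2 h'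
      calc (S.image f).card ≤ _ := Finset.card_le_card hsub
        _ ≤ ((Finset.univ.filter fun m : F =>
            (1 + β₀) + 0 * m + s * (3 - β₀) * m ^ 2 = 0).map
              Function.Embedding.some).card + 1 := Finset.card_insert_le _ _
        _ ≤ 2 + 1 := by
            rw [Finset.card_map]
            exact Nat.add_le_add_right (quad_filter_card _ _ _ hcoef) 1
        _ ≤ 3 := by norm_num
    · -- genuine cubic: no vertical solutions, at most 3 slopes
      have hsub : S.image f ⊆
          (Finset.univ.filter fun m : F =>
            (1 + β₀) + s * β₁ * m + s * (3 - β₀) * m ^ 2 + (-(s ^ 2 * β₁)) * m ^ 3 = 0).map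
              Function.Embedding.some := by
        intro b hb
        obtain ⟨p, hpS, hfp⟩ := Finset.mem_image.mp hb
        obtain ⟨hne, hA, _⟩ := hmem p hpS
        by_cases hp1 : p.1 = 0
        · exfalso
          rw [hp1] at hA
          have key : (-(s ^ 2 * β₁)) * p.2 ^ 3 = 0 := by linear_combination hA
          have hp2 : p.2 = 0 := by
            have hcn : -(s ^ 2 * β₁) ≠ 0 := by
              simp only [neg_ne_zero]
              exact mul_ne_zero (pow_ne_zero 2 hs0) hb1
            have := (mul_eq_zero.mp key).resolve_left hcn
            exact pow_eq_zero_iff (n := 3) (by norm_num) |>.mp this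
          exact hne (Prod.ext hp1 hp2)
        · have hfp' : f p = some (p.2 / p.1) := by rw [hf]; simp [hp1]
          obtain ⟨_, hp2⟩ := hslope p hpS (p.2 / p.1) hfp'
          rw [hp2] at hA
          set m := p.2 / p.1
          have key : p.1 ^ 3 * ((1 + β₀) + s * β₁ * m + s * (3 - β₀) * m ^ 2
              + (-(s ^ 2 * β₁)) * m ^ 3) = 0 := by
            linear_combination hA
          have hq0 := (mul_eq_zero.mp key).resolve_left (pow_ne_zero 3 hp1)
          rw [← hfp, hfp']
          rw [Finset.mem_map]
          exact ⟨m, Finset.mem_filter.mpr ⟨Finset.mem_univ _, hq0⟩, rfl⟩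
      have hcoef : ¬((1 + β₀ : F) = 0 ∧ s * β₁ = 0 ∧ s * (3 - β₀) = 0 ∧ -(s ^ 2 * β₁) = 0) := by
        rintro ⟨_, hc, _, _⟩
        rcases mul_eq_zero.mp hc with h' | h'
        · exact hs0 h'
        · exact hb1 h'
      calc (S.image f).card ≤ _ := Finset.card_le_card hsub
        _ = _ := Finset.card_map _
        _ ≤ 3 := cubic_filter_card _ _ _ _ hcoef
  calc S.card ≤ 2 * (S.image f).card := Finset.card_le_mul_card_image S 2 hfib
    _ ≤ 2 * 3 := Nat.mul_le_mul_left 2 himg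
    _ = 6 := rfl
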